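/- Let H be a separable Hilbert space and let K, T : (0, z₀) → compact self-adjoint operators on H. Suppose that for every ε > 0 there are z₁ > 0, k ∈ ℕ, and decompositions K(z) − T(z) = B_ε(z) + P_ε(z) with self-adjoint B_ε(z), P_ε(z), sup_{z<z₁} ‖B_ε(z)‖ < ε, and rank P_ε(z) ≤ k. Suppose further that ξ(z) → ∞ as z → 0 and lim_{z→0} ξ(z)^{−1} n(T(z), a) = 1/(πa) for every a > 0. Then lim_{z→0} ξ(z)^{−1} n(K(z), a) = 1/(πa) for every a > 0. -/

import Mathlib

open TopologicalSpace Set Real Filter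

/-- Number of eigenvalues of `A` greater than `a`, counted with multiplicity. -/
noncomputable def nEig {H : Type*} [NormedAddCommGroup H] [InnerProductSpace ℂ H]
    (A : H →L[ℂ] H) (a : ℝ) : ℕ :=
  Module.finrank ℂ
    ↥(⨆ μ : {μ : ℝ // a < μ}, Module.End.eigenspace (A : H →ₗ[ℂ] H) ((μ : ℝ) : ℂ))


section AuxWeyl

open RCLike Submodule Metric Topology Module.End Finset

variable {E : Type*} [NormedAddCommGroup E] [InnerProductSpace ℂ E]

local notation "⟪" x ", " y "⟫" => @inner ℂ _ _ x y

lemma re_ofReal_mul' (r : ℝ) (z : ℂ) : re ((r:ℂ) * z) = r * re z := by simp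

lemma cs_nonneg (S : E →L[ℂ] E) (hS : (S : E →ₗ[ℂ] E).IsSymmetric)
    (hpos : ∀ x : E, 0 ≤ re ⟪S x, x⟫) (x y : E) :
    (re ⟪S x, y⟫) ^ 2 ≤ re ⟪S x, x⟫ * re ⟪S y, y⟫ := by
  have key : ∀ t : ℝ, 0 ≤ (re ⟪S y, y⟫) * (t * t) + (2 * re ⟪S x, y⟫) * t + re ⟪S x, x⟫ := by
    intro t
    have h0 := hpos (x + (t : ℂ) • y)
    have hsym : re ⟪S y, x⟫ = re ⟪S x, y⟫ := by
      have h1 : (⟪S y, x⟫ : ℂ) = ⟪y, S x⟫ := hS y x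
      rw [h1]; exact inner_re_symm _ _
    have hexp : (⟪S (x + (t:ℂ) • y), x + (t:ℂ) • y⟫ : ℂ)
        = ⟪S x, x⟫ + (t:ℂ) * ⟪S x, y⟫ + (t:ℂ) * ⟪S y, x⟫ + (t:ℂ) * ((t:ℂ) * ⟪S y, y⟫) := by
      rw [map_add, map_smul, inner_add_left, inner_add_right, inner_add_right,
        inner_smul_left, inner_smul_right, inner_smul_left, inner_smul_right,
        Complex.conj_ofReal]
      ring
    rw [hexp] at h0
    have hre : ∀ z : ℂ, re ((t:ℂ) * z) = t * re z := by
      intro z; simp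
    simp only [map_add, hre] at h0
    rw [hsym] at h0; linarith [h0]
  have hd := discrim_le_zero key
  rw [discrim] at hd
  nlinarith [hd]

lemma exists_eigenvector_of_sup [CompleteSpace E] (A : E →L[ℂ] E)
    (hA : (A : E →ₗ[ℂ] E).IsSymmetric) (hAc : IsCompactOperator A) {M : ℝ} (hM : 0 < M)
    (hub : ∀ x : E, re ⟪A x, x⟫ ≤ M * ‖x‖ ^ 2)
    (hsup : ∀ δ : ℝ, 0 < δ → ∃ x : E, ‖x‖ = 1 ∧ M - δ < re ⟪A x, x⟫) :
    ∃ w : E, w ≠ 0 ∧ A w = (M : ℂ) • w := by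
  set S : E →L[ℂ] E := (M : ℂ) • ContinuousLinearMap.id ℂ E - A with hSdef
  have hSapp : ∀ x : E, S x = (M : ℂ) • x - A x := fun x => rfl
  have hSsym : (S : E →ₗ[ℂ] E).IsSymmetric := by
    intro x y
    have h1 : (⟪A x, y⟫ : ℂ) = ⟪x, A y⟫ := hA x y
    simp only [ContinuousLinearMap.coe_coe, hSapp, inner_sub_left, inner_sub_right,
      inner_smul_left, inner_smul_right, Complex.conj_ofReal, h1]
  have hq : ∀ x : E, re ⟪S x, x⟫ = M * ‖x‖ ^ 2 - re ⟪A x, x⟫ := by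
    intro x
    rw [hSapp, inner_sub_left, inner_smul_left, Complex.conj_ofReal, map_sub, re_ofReal_mul']
    rw [inner_self_eq_norm_sq]
  have hpos : ∀ x : E, 0 ≤ re ⟪S x, x⟫ := by
    intro x; rw [hq]; linarith [hub x]
  -- the approximating sequence
  have hex : ∀ n : ℕ, ∃ x : E, ‖x‖ = 1 ∧ M - 1 / (n + 1) < re ⟪A x, x⟫ := by
    intro n
    exact hsup (1 / (n + 1)) (by positivity)
  choose x hx1 hx2 using hex
  have hSx : ∀ n : ℕ, ‖S (x n)‖ ^ 2 ≤ 1 / (n + 1) * ‖S‖ := by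
    intro n
    have hc : re ⟪S (x n), x n⟫ < 1 / (n + 1) := by
      rw [hq, hx1]; have := hx2 n; nlinarith [hx2 n]
    have hcs := cs_nonneg S hSsym hpos (x n) (S (x n))
    have h1 : re ⟪S (x n), S (x n)⟫ = ‖S (x n)‖ ^ 2 := inner_self_eq_norm_sq _
    have h2 : re ⟪S (S (x n)), S (x n)⟫ ≤ ‖S‖ * ‖S (x n)‖ ^ 2 := by
      calc re ⟪S (S (x n)), S (x n)⟫ ≤ ‖S (S (x n))‖ * ‖S (x n)‖ := re_inner_le_norm _ _
        _ ≤ (‖S‖ * ‖S (x n)‖) * ‖S (x n)‖ := by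
            gcongr; exact S.le_opNorm _
        _ = ‖S‖ * ‖S (x n)‖ ^ 2 := by ring
    rw [h1] at hcs
    rcases eq_or_lt_of_le (norm_nonneg (S (x n))) with h0 | h0
    · rw [← h0]; norm_num; positivity
    · have hc0 : 0 ≤ re ⟪S (x n), x n⟫ := hpos _
      have hr0 : 0 ≤ re ⟪S (S (x n)), S (x n)⟫ := hpos _
      have h3 : ‖S (x n)‖ ^ 2 * ‖S (x n)‖ ^ 2 ≤ (1 / (n + 1) * ‖S‖) * ‖S (x n)‖ ^ 2 := by
        nlinarith [hcs, mul_le_mul_of_nonneg_left h2 hc0,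
          mul_nonneg (mul_nonneg (sub_nonneg.mpr hc.le) (norm_nonneg S)) (sq_nonneg ‖S (x n)‖)]
      exact le_of_mul_le_mul_right h3 (by positivity)
  have hlim : Tendsto (fun n => S (x n)) atTop (𝓝 0) := by
    rw [tendsto_zero_iff_norm_tendsto_zero]
    have hg : Tendsto (fun n : ℕ => Real.sqrt (1 / ((n : ℝ) + 1) * ‖S‖)) atTop (𝓝 0) := by
      have h1 : Tendsto (fun n : ℕ => 1 / ((n : ℝ) + 1) * ‖S‖) atTop (𝓝 0) := by
        simpa using tendsto_one_div_add_atTop_nhds_zero_nat.mul_const ‖S‖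
      have h2 := (Real.continuous_sqrt.tendsto 0).comp h1
      rw [Real.sqrt_zero] at h2
      exact h2
    exact squeeze_zero (fun n => norm_nonneg _)
      (fun n => Real.le_sqrt_of_sq_le (hSx n)) hg
  -- compactness: extract a convergent subsequence of A (x n)
  have hC : IsCompact (closure ((A : E →ₗ[ℂ] E) '' closedBall 0 1)) :=
    IsCompactOperator.isCompact_closure_image_closedBall (𝕜₁ := ℂ)
      (f := (A : E →ₗ[ℂ] E)) hAc 1
  have hmem : ∀ n : ℕ, A (x n) ∈ closure ((A : E →ₗ[ℂ] E) '' closedBall 0 1) := by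
    intro n
    exact subset_closure ⟨x n, by simp [hx1], rfl⟩
  obtain ⟨z, hzC, φ, hφ, hconv⟩ := hC.tendsto_subseq hmem
  have hSlim : Tendsto (fun n => S (x (φ n))) atTop (𝓝 0) :=
    hlim.comp hφ.tendsto_atTop
  have hMx : Tendsto (fun n => (M : ℂ) • x (φ n)) atTop (𝓝 z) := by
    have : (fun n => (M : ℂ) • x (φ n)) = fun n => S (x (φ n)) + A (x (φ n)) := by
      funext n; rw [hSapp]; abel
    rw [this]
    simpa using hSlim.add hconv
  set w : E := (M : ℂ)⁻¹ • z with hw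
  have hMne : (M : ℂ) ≠ 0 := by
    simp only [ne_eq, Complex.ofReal_eq_zero]; exact hM.ne'
  have hxw : Tendsto (fun n => x (φ n)) atTop (𝓝 w) := by
    have h := hMx.const_smul ((M : ℂ)⁻¹)
    simp only [inv_smul_smul₀ hMne] at h
    exact h
  have hAw : A w = z := by
    have h1 : Tendsto (fun n => A (x (φ n))) atTop (𝓝 (A w)) :=
      (A.continuous.tendsto w).comp hxw
    exact tendsto_nhds_unique h1 hconv
  have hwn : ‖w‖ = 1 := by
    have h1 : Tendsto (fun n => ‖x (φ n)‖) atTop (𝓝 ‖w‖) :=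
      (continuous_norm.tendsto w).comp hxw
    have h2 : Tendsto (fun n => ‖x (φ n)‖) atTop (𝓝 1) := by
      simpa [hx1] using tendsto_const_nhds (α := ℕ) (x := (1:ℝ))
    exact tendsto_nhds_unique h1 h2
  refine ⟨w, by simp [← norm_pos_iff, hwn], ?_⟩
  rw [hAw, hw, smul_inv_smul₀ hMne]

lemma rayleigh_scale (A : E →L[ℂ] E) (u : E) (c : ℝ) :
    re ⟪A ((c:ℂ) • u), (c:ℂ) • u⟫ = c ^ 2 * re ⟪A u, u⟫ := by
  rw [map_smul, inner_smul_left, inner_smul_right, Complex.conj_ofReal, ← mul_assoc,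
    ← Complex.ofReal_mul, re_ofReal_mul']
  ring

/-- On the orthogonal complement of the span of eigenspaces above `a`, the quadratic form of a
compact symmetric operator is at most `a`. -/
lemma re_inner_le_of_orthogonal [CompleteSpace E] (A : E →L[ℂ] E)
    (hA : (A : E →ₗ[ℂ] E).IsSymmetric) (hAc : IsCompactOperator A) {a : ℝ} (ha : 0 < a)
    {x : E}
    (hx : x ∈ (⨆ μ : {μ : ℝ // a < μ},
      Module.End.eigenspace (A : E →ₗ[ℂ] E) ((μ : ℝ) : ℂ))ᗮ) :
    re ⟪A x, x⟫ ≤ a * ‖x‖ ^ 2 := by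
  set V := ⨆ μ : {μ : ℝ // a < μ}, Module.End.eigenspace (A : E →ₗ[ℂ] E) ((μ : ℝ) : ℂ) with hV
  by_contra hcon
  push_neg at hcon
  have hxne : x ≠ 0 := by
    rintro rfl
    simp at hcon
  -- the orthogonal complement W is invariant under A
  have hinv : ∀ v ∈ Vᗮ, A v ∈ Vᗮ := by
    intro v hv
    have h1 : Vᗮ = ⨅ μ : {μ : ℝ // a < μ},
        (Module.End.eigenspace (A : E →ₗ[ℂ] E) ((μ : ℝ) : ℂ))ᗮ :=
      (Submodule.iInf_orthogonal _).symm
    rw [h1] at hv ⊢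
    exact (A : E →ₗ[ℂ] E).iInf_invariant
      (p := fun μ : {μ : ℝ // a < μ} =>
        (Module.End.eigenspace (A : E →ₗ[ℂ] E) ((μ : ℝ) : ℂ))ᗮ)
      (fun μ w hw => hA.invariant_orthogonalComplement_eigenspace ((μ : ℝ) : ℂ) w hw) v hv
  haveI : CompleteSpace ↥(Vᗮ) := (Submodule.isClosed_orthogonal V).completeSpace_coe
  -- restriction of A to W
  set Aw : ↥(Vᗮ) →L[ℂ] ↥(Vᗮ) :=
    ⟨(A : E →ₗ[ℂ] E).restrict hinv,
      Continuous.subtype_mk (A.continuous.comp continuous_subtype_val) _⟩ with hAwdef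
  have hAws : (Aw : ↥(Vᗮ) →ₗ[ℂ] ↥(Vᗮ)).IsSymmetric := hA.restrict_invariant hinv
  have hAwc : IsCompactOperator Aw := by
    exact IsCompactOperator.restrict' (f := (A : E →ₗ[ℂ] E)) hAc hinv
  have hAwval : ∀ u : ↥(Vᗮ), (Aw u : E) = A (u : E) := fun u => rfl
  have hAwinner : ∀ u w : ↥(Vᗮ), (⟪Aw u, w⟫ : ℂ) = ⟪A (u : E), (w : E)⟫ := fun u w => rfl
  -- the Rayleigh set
  set Q : ↥(Vᗮ) → ℝ := fun u => re ⟪Aw u, u⟫ with hQ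
  set Sset := Q '' {u : ↥(Vᗮ) | ‖u‖ = 1} with hSset
  set v : ↥(Vᗮ) := ⟨x, hx⟩ with hvdef
  have hvnorm : ‖v‖ = ‖x‖ := rfl
  set u₀ : ↥(Vᗮ) := ((‖x‖⁻¹ : ℝ) : ℂ) • v with hu₀
  have hu₀norm : ‖u₀‖ = 1 := by
    rw [hu₀, norm_smul]
    simp [hvnorm, norm_ne_zero_iff.mpr hxne]
  have hQu₀ : a < Q u₀ := by
    have h1 : Q u₀ = (‖x‖⁻¹) ^ 2 * re ⟪A x, x⟫ := by
      rw [hQ]; simp only [hu₀]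
      rw [rayleigh_scale Aw v]
      rfl
    rw [h1]
    have hn : (0:ℝ) < ‖x‖ := norm_pos_iff.mpr hxne
    rw [show (‖x‖⁻¹)^2 = (‖x‖^2)⁻¹ by rw [inv_pow]]
    rw [lt_inv_mul_iff₀ (by positivity)]
    linarith [hcon]
  have hbdd : BddAbove Sset := by
    refine ⟨‖A‖, ?_⟩
    rintro r ⟨u, hu, rfl⟩
    have : re ⟪Aw u, u⟫ ≤ ‖A (u:E)‖ * ‖(u:E)‖ := by
      rw [hAwinner]; exact re_inner_le_norm _ _
    have h2 : ‖(u:E)‖ = 1 := hu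
    calc Q u ≤ ‖A (u:E)‖ * ‖(u:E)‖ := this
      _ ≤ (‖A‖ * ‖(u:E)‖) * ‖(u:E)‖ := by gcongr; exact A.le_opNorm _
      _ = ‖A‖ := by rw [h2]; ring
  have hne : Sset.Nonempty := ⟨Q u₀, u₀, hu₀norm, rfl⟩
  set M := sSup Sset with hM
  have hMgt : a < M := lt_of_lt_of_le hQu₀ (le_csSup hbdd ⟨u₀, hu₀norm, rfl⟩)
  have hMpos : 0 < M := lt_trans ha hMgt
  have hub : ∀ u : ↥(Vᗮ), re ⟪Aw u, u⟫ ≤ M * ‖u‖ ^ 2 := by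
    intro u
    rcases eq_or_ne u 0 with rfl | hune
    · simp
    · have hn : (0:ℝ) < ‖u‖ := norm_pos_iff.mpr hune
      set c := re ⟪Aw u, u⟫ with hcdef
      have h1 : Q (((‖u‖⁻¹ : ℝ) : ℂ) • u) ≤ M := by
        refine le_csSup hbdd ⟨_, ?_, rfl⟩
        show ‖((‖u‖⁻¹ : ℝ) : ℂ) • u‖ = 1
        rw [norm_smul, Complex.norm_real, Real.norm_eq_abs,
          abs_of_nonneg (inv_nonneg.mpr hn.le), inv_mul_cancel₀ hn.ne']
      have h2 : Q (((‖u‖⁻¹ : ℝ) : ℂ) • u) = (‖u‖⁻¹) ^ 2 * c := by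
        rw [hQ]; exact rayleigh_scale Aw u _
      rw [h2] at h1
      have h3 := mul_le_mul_of_nonneg_left h1 (sq_nonneg ‖u‖)
      have hn2 : ‖(u : E)‖ ≠ 0 := hn.ne'
      have h5 : ‖u‖ ^ 2 * ((‖u‖⁻¹) ^ 2 * c) = c := by
        field_simp [hn2]
      rw [mul_comm]
      linarith [h3, h5]
  have hsup : ∀ δ : ℝ, 0 < δ → ∃ u : ↥(Vᗮ), ‖u‖ = 1 ∧ M - δ < re ⟪Aw u, u⟫ := by
    intro δ hδ
    obtain ⟨r, ⟨u, hu, rfl⟩, hr⟩ := exists_lt_of_lt_csSup hne (by linarith : M - δ < M)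
    exact ⟨u, hu, hr⟩
  obtain ⟨w, hwne, hweq⟩ := exists_eigenvector_of_sup Aw hAws hAwc hMpos hub hsup
  -- w is an eigenvector of A with eigenvalue M > a, but lies in Vᗮ : contradiction
  have hweq' : A (w : E) = (M : ℂ) • (w : E) := by
    have := congrArg (Subtype.val) hweq
    simpa [hAwval] using this
  have hmemV : (w : E) ∈ V := by
    have hle : Module.End.eigenspace (A : E →ₗ[ℂ] E) ((M : ℝ) : ℂ) ≤ V :=
      le_iSup (fun μ : {μ : ℝ // a < μ} =>
        Module.End.eigenspace (A : E →ₗ[ℂ] E) ((μ : ℝ) : ℂ)) ⟨M, hMgt⟩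
    exact hle (Module.End.mem_eigenspace_iff.mpr hweq')
  have : (⟪(w : E), (w : E)⟫ : ℂ) = 0 := w.2 (w : E) hmemV
  rw [inner_self_eq_zero] at this
  exact hwne (Subtype.ext this)

section sums

variable {ι : Type*}

lemma inner_sum_orthogonal (f : ι → E) (s : Finset ι)
    (horth : ∀ i ∈ s, ∀ j ∈ s, i ≠ j → (⟪f i, f j⟫ : ℂ) = 0) (c d : ι → ℂ) :
    (⟪∑ i ∈ s, c i • f i, ∑ j ∈ s, d j • f j⟫ : ℂ)
      = ∑ i ∈ s, (starRingEnd ℂ) (c i) * d i * ⟪f i, f i⟫ := by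
  rw [sum_inner]
  refine Finset.sum_congr rfl fun i hi => ?_
  rw [inner_sum]
  rw [Finset.sum_eq_single i]
  · rw [inner_smul_left, inner_smul_right]; ring
  · intro j hj hne
    rw [inner_smul_left, inner_smul_right, horth i hi j hj (fun h => hne h.symm)]
    ring
  · intro h; exact absurd hi h
end sums

section decomp

variable {a : ℝ}

/-- orthogonality of eigenvectors for distinct eigenvalues above `a` -/
lemma eigen_orth (A : E →L[ℂ] E) (hA : (A : E →ₗ[ℂ] E).IsSymmetric) (f : {μ : ℝ // a < μ} → E)
    (hf : ∀ i : {μ : ℝ // a < μ}, f i ∈ Module.End.eigenspace (A : E →ₗ[ℂ] E) ((i : ℝ) : ℂ)) :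
    ∀ i j : {μ : ℝ // a < μ}, i ≠ j → (⟪f i, f j⟫ : ℂ) = 0 := by
  intro i j hij
  have hij' : ((i : ℝ) : ℂ) ≠ ((j : ℝ) : ℂ) := by
    simp only [ne_eq, Complex.ofReal_inj]
    exact fun h => hij (Subtype.ext h)
  exact hA.orthogonalFamily_eigenspaces hij' ⟨f i, hf i⟩ ⟨f j, hf j⟩

/-- The quadratic form is at least `a` on the span of eigenspaces above `a`. -/
lemma re_inner_ge_of_mem (A : E →L[ℂ] E) (hA : (A : E →ₗ[ℂ] E).IsSymmetric) {x : E}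
    (hx : x ∈ ⨆ μ : {μ : ℝ // a < μ},
      Module.End.eigenspace (A : E →ₗ[ℂ] E) ((μ : ℝ) : ℂ)) (ha : 0 ≤ a) :
    a * ‖x‖ ^ 2 ≤ re ⟪A x, x⟫ := by
  obtain ⟨f, hf, hsum⟩ := (Submodule.mem_iSup_iff_exists_finsupp _ _).mp hx
  set s := f.support with hs
  have hxs : x = ∑ i ∈ s, ((1 : ℂ)) • f i := by
    rw [← hsum]; simp [Finsupp.sum, hs]
  have horth := eigen_orth A hA f hf
  have horth' : ∀ i ∈ s, ∀ j ∈ s, i ≠ j → (⟪f i, f j⟫ : ℂ) = 0 :=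
    fun i _ j _ hij => horth i j hij
  have hAx : A x = ∑ i ∈ s, (((i : ℝ) : ℂ)) • f i := by
    rw [hxs, map_sum]
    refine Finset.sum_congr rfl fun i hi => ?_
    rw [one_smul]
    exact Module.End.mem_eigenspace_iff.mp (hf i)
  have hAxx : (⟪A x, x⟫ : ℂ) = ∑ i ∈ s, ((i : ℝ) : ℂ) * ⟪f i, f i⟫ := by
    rw [hAx, hxs.trans rfl, inner_sum_orthogonal f s horth' _ _]
    refine Finset.sum_congr rfl fun i hi => ?_
    rw [Complex.conj_ofReal]; ring
  have hxx : (⟪x, x⟫ : ℂ) = ∑ i ∈ s, ⟪f i, f i⟫ := by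
    conv_lhs => rw [hxs]
    rw [inner_sum_orthogonal f s horth' _ _]
    refine Finset.sum_congr rfl fun i hi => ?_
    simp
  have hnormsq : ‖x‖ ^ 2 = ∑ i ∈ s, re ⟪f i, f i⟫ := by
    rw [← inner_self_eq_norm_sq (𝕜 := ℂ) x, hxx, map_sum]
  have hre : re ⟪A x, x⟫ = ∑ i ∈ s, (i : ℝ) * re ⟪f i, f i⟫ := by
    rw [hAxx, map_sum]
    exact Finset.sum_congr rfl fun i _ => re_ofReal_mul' _ _
  rw [hre, hnormsq, Finset.mul_sum]
  refine Finset.sum_le_sum fun i hi => ?_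
  have h1 : 0 ≤ re ⟪f i, f i⟫ := by
    rw [inner_self_eq_norm_sq (𝕜 := ℂ)]; positivity
  have h2 : a ≤ (i : ℝ) := le_of_lt i.2
  exact mul_le_mul_of_nonneg_right h2 h1

/-- Every element of the span of eigenspaces above `a > 0` has a preimage with controlled norm. -/
lemma exists_preimage_of_mem (A : E →L[ℂ] E) (hA : (A : E →ₗ[ℂ] E).IsSymmetric) (ha : 0 < a) {x : E}
    (hx : x ∈ ⨆ μ : {μ : ℝ // a < μ},
      Module.End.eigenspace (A : E →ₗ[ℂ] E) ((μ : ℝ) : ℂ)) :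
    ∃ y : E, A y = x ∧ a * ‖y‖ ≤ ‖x‖ := by
  obtain ⟨f, hf, hsum⟩ := (Submodule.mem_iSup_iff_exists_finsupp _ _).mp hx
  set s := f.support with hs
  have hxs : x = ∑ i ∈ s, ((1 : ℂ)) • f i := by
    rw [← hsum]; simp [Finsupp.sum, hs]
  have horth := eigen_orth A hA f hf
  have horth' : ∀ i ∈ s, ∀ j ∈ s, i ≠ j → (⟪f i, f j⟫ : ℂ) = 0 :=
    fun i _ j _ hij => horth i j hij
  have hipos : ∀ i : {μ : ℝ // a < μ}, (0:ℝ) < (i : ℝ) := fun i => lt_trans ha i.2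
  set y := ∑ i ∈ s, ((((i : ℝ)⁻¹ : ℝ)) : ℂ) • f i with hy
  have hAy : A y = x := by
    rw [hy, map_sum, hxs]
    refine Finset.sum_congr rfl fun i hi => ?_
    have he : A (f i) = ((i : ℝ) : ℂ) • f i := Module.End.mem_eigenspace_iff.mp (hf i)
    rw [map_smul, he, smul_smul, one_smul]
    rw [← Complex.ofReal_mul, inv_mul_cancel₀ (hipos i).ne']
    simp
  refine ⟨y, hAy, ?_⟩
  have hyy : (⟪y, y⟫ : ℂ) = ∑ i ∈ s, ((((i : ℝ)⁻¹ : ℝ)) : ℂ) ^ 2 * ⟪f i, f i⟫ := by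
    rw [hy, inner_sum_orthogonal f s horth' _ _]
    refine Finset.sum_congr rfl fun i hi => ?_
    rw [Complex.conj_ofReal]; ring
  have hxx : (⟪x, x⟫ : ℂ) = ∑ i ∈ s, ⟪f i, f i⟫ := by
    conv_lhs => rw [hxs]
    rw [inner_sum_orthogonal f s horth' _ _]
    refine Finset.sum_congr rfl fun i hi => ?_
    simp
  have hfn : ∀ i, 0 ≤ re ⟪f i, f i⟫ := fun i => by
    rw [inner_self_eq_norm_sq (𝕜 := ℂ)]; positivity
  have hysq : ‖y‖ ^ 2 = ∑ i ∈ s, ((i : ℝ)⁻¹) ^ 2 * re ⟪f i, f i⟫ := by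
    rw [← inner_self_eq_norm_sq (𝕜 := ℂ) y, hyy, map_sum]
    refine Finset.sum_congr rfl fun i _ => ?_
    rw [show ((((i : ℝ)⁻¹ : ℝ)) : ℂ) ^ 2 = (((((i : ℝ)⁻¹) ^ 2 : ℝ)) : ℂ) by push_cast; ring]
    exact re_ofReal_mul' _ _
  have hxsq : ‖x‖ ^ 2 = ∑ i ∈ s, re ⟪f i, f i⟫ := by
    rw [← inner_self_eq_norm_sq (𝕜 := ℂ) x, hxx, map_sum]
  have hkey : a ^ 2 * ‖y‖ ^ 2 ≤ ‖x‖ ^ 2 := by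
    rw [hysq, hxsq, Finset.mul_sum]
    refine Finset.sum_le_sum fun i hi => ?_
    have h2 : a ^ 2 * ((i : ℝ)⁻¹) ^ 2 ≤ 1 := by
      rw [← mul_pow]
      have : a * (i : ℝ)⁻¹ ≤ 1 := by
        rw [← div_eq_mul_inv, div_le_one (hipos i)]
        exact le_of_lt i.2
      have h0 : 0 ≤ a * (i : ℝ)⁻¹ := mul_nonneg ha.le (inv_nonneg.mpr (hipos i).le)
      nlinarith
    calc a ^ 2 * (((i : ℝ)⁻¹) ^ 2 * re ⟪f i, f i⟫)
        = (a ^ 2 * ((i : ℝ)⁻¹) ^ 2) * re ⟪f i, f i⟫ := by ring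
      _ ≤ 1 * re ⟪f i, f i⟫ := mul_le_mul_of_nonneg_right h2 (hfn i)
      _ = re ⟪f i, f i⟫ := one_mul _
  nlinarith [norm_nonneg y, norm_nonneg x, mul_nonneg ha.le (norm_nonneg y), hkey]
end decomp

/-- The span of eigenspaces above `a > 0` of a compact operator is finite-dimensional. -/
lemma finiteDimensional_topEigenspaces [CompleteSpace E] (A : E →L[ℂ] E)
    (hA : (A : E →ₗ[ℂ] E).IsSymmetric) (hAc : IsCompactOperator A) {a : ℝ} (ha : 0 < a) :
    FiniteDimensional ℂ
      ↥(⨆ μ : {μ : ℝ // a < μ}, Module.End.eigenspace (A : E →ₗ[ℂ] E) ((μ : ℝ) : ℂ)) := by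
  set V := ⨆ μ : {μ : ℝ // a < μ}, Module.End.eigenspace (A : E →ₗ[ℂ] E) ((μ : ℝ) : ℂ) with hV
  set C := closure ((A : E →ₗ[ℂ] E) '' closedBall (0 : E) (2 / a)) with hC
  have hCcompact : IsCompact C :=
    IsCompactOperator.isCompact_closure_image_closedBall (𝕜₁ := ℂ)
      (f := (A : E →ₗ[ℂ] E)) hAc _
  set M := V.topologicalClosure with hM
  have hMclosed : IsClosed (M : Set E) := Submodule.isClosed_topologicalClosure V
  -- the unit ball of the closure of V is contained in C
  have hball : (M : Set E) ∩ closedBall (0 : E) 1 ⊆ C := by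
    rintro x ⟨hxM, hx1⟩
    have hxcl : x ∈ closure (V : Set E) := hxM
    obtain ⟨u, hu, hulim⟩ := mem_closure_iff_seq_limit.mp hxcl
    choose y hy1 hy2 using fun n => exists_preimage_of_mem A hA ha (hu n)
    have hnormlim : Tendsto (fun n => ‖u n‖) atTop (𝓝 ‖x‖) :=
      (continuous_norm.tendsto x).comp hulim
    have hxn : ‖x‖ < 2 := lt_of_le_of_lt (mem_closedBall_zero_iff.mp hx1) one_lt_two
    have hev : ∀ᶠ n in atTop, ‖u n‖ < 2 := hnormlim.eventually_lt_const hxn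
    have hev2 : ∀ᶠ n in atTop, A (y n) ∈ (A : E →ₗ[ℂ] E) '' closedBall (0 : E) (2 / a) := by
      filter_upwards [hev] with n hn
      refine ⟨y n, ?_, rfl⟩
      rw [mem_closedBall_zero_iff]
      rw [le_div_iff₀ ha]
      calc ‖y n‖ * a = a * ‖y n‖ := by ring
        _ ≤ ‖u n‖ := hy2 n
        _ ≤ 2 := hn.le
    have hAyx : Tendsto (fun n => A (y n)) atTop (𝓝 x) := by
      have : (fun n => A (y n)) = u := funext fun n => hy1 n
      rw [this]; exact hulim
    exact mem_closure_of_tendsto hAyx hev2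
  -- hence the closed unit ball of M is compact
  have hcball : IsCompact (closedBall (0 : ↥M) 1) := by
    rw [Topology.IsEmbedding.subtypeVal.isCompact_iff]
    have himg : Subtype.val '' closedBall (0 : ↥M) 1 = (M : Set E) ∩ closedBall (0 : E) 1 := by
      ext z
      constructor
      · rintro ⟨w, hw, rfl⟩
        exact ⟨w.2, by simpa [mem_closedBall_zero_iff] using mem_closedBall_zero_iff.mp hw⟩
      · rintro ⟨hz, hz1⟩
        exact ⟨⟨z, hz⟩, by simpa [mem_closedBall_zero_iff] using mem_closedBall_zero_iff.mp hz1,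
          rfl⟩
    rw [himg]
    exact hCcompact.of_isClosed_subset (hMclosed.inter Metric.isClosed_closedBall) hball
  haveI hMfin : FiniteDimensional ℂ ↥M :=
    FiniteDimensional.of_isCompact_closedBall₀ ℂ one_pos hcball
  exact Submodule.finiteDimensional_of_le V.le_topologicalClosure

/-- In a fin.-dim. situation, a subspace of larger dimension contains a nonzero vector orthogonal
to a given subspace. -/
lemma exists_orthogonal_of_finrank_lt [CompleteSpace E] {W F : Submodule ℂ E}
    [FiniteDimensional ℂ W] [FiniteDimensional ℂ F]
    (h : Module.finrank ℂ F < Module.finrank ℂ W) :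
    ∃ x : E, x ∈ W ∧ x ≠ 0 ∧ x ∈ Fᗮ := by
  haveI : CompleteSpace F := FiniteDimensional.complete ℂ F
  set ψ : ↥W →ₗ[ℂ] ↥F := (orthogonalProjection F).toLinearMap.comp (W.subtype) with hψ
  by_cases hinj : Function.Injective ψ
  · exact absurd (LinearMap.finrank_le_finrank_of_injective hinj) (not_le.mpr h)
  · rw [← LinearMap.ker_eq_bot] at hinj
    obtain ⟨v, hvmem, hvne⟩ := Submodule.exists_mem_ne_zero_of_ne_bot hinj
    refine ⟨(v : E), v.2, fun hz => hvne (Subtype.ext hz), ?_⟩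
    rw [← orthogonalProjection_eq_zero_iff]
    exact hvmem

/-- Weyl-type inequality: a perturbation by a small operator plus a finite-rank operator moves
the eigenvalue counting function in a controlled way. -/
lemma weyl_bound [CompleteSpace E] (A A' B P : E →L[ℂ] E)
    (hA : (A : E →ₗ[ℂ] E).IsSymmetric) (hAc : IsCompactOperator A)
    (hA' : (A' : E →ₗ[ℂ] E).IsSymmetric) (hA'c : IsCompactOperator A')
    {a ε : ℝ} (ha : 0 < a) (hε : 0 < ε)
    (hdecomp : A' = A + B + P) (hB : ‖B‖ < ε)
    (hPfin : Module.Finite ℂ ↥(LinearMap.range (P : E →ₗ[ℂ] E))) :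
    nEig A' (a + ε) ≤ nEig A a + Module.finrank ℂ ↥(LinearMap.range (P : E →ₗ[ℂ] E)) := by
  classical
  set V' := ⨆ μ : {μ : ℝ // a + ε < μ},
    Module.End.eigenspace (A' : E →ₗ[ℂ] E) ((μ : ℝ) : ℂ) with hV'
  set V := ⨆ μ : {μ : ℝ // a < μ},
    Module.End.eigenspace (A : E →ₗ[ℂ] E) ((μ : ℝ) : ℂ) with hV
  set R := LinearMap.range (P : E →ₗ[ℂ] E) with hR
  haveI hfV' : FiniteDimensional ℂ ↥V' :=
    finiteDimensional_topEigenspaces A' hA' hA'c (by linarith)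
  haveI hfV : FiniteDimensional ℂ ↥V := finiteDimensional_topEigenspaces A hA hAc ha
  haveI hfR : FiniteDimensional ℂ ↥R := hPfin
  set F := V ⊔ R with hF
  haveI hfF : FiniteDimensional ℂ ↥F := inferInstance
  have hrank : Module.finrank ℂ ↥F ≤ Module.finrank ℂ ↥V + Module.finrank ℂ ↥R := by
    have h := Submodule.finrank_sup_add_finrank_inf_eq V R
    rw [← hF] at h
    omega
  -- main step : finrank V' ≤ finrank F
  have hmain : Module.finrank ℂ ↥V' ≤ Module.finrank ℂ ↥F := by
    by_contra hlt
    push_neg at hlt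
    obtain ⟨x, hxV', hxne, hxF⟩ := exists_orthogonal_of_finrank_lt hlt
    have hxV : x ∈ Vᗮ := (Submodule.orthogonal_le le_sup_left : Fᗮ ≤ Vᗮ) hxF
    have hxR : x ∈ Rᗮ := (Submodule.orthogonal_le le_sup_right : Fᗮ ≤ Rᗮ) hxF
    have hxpos : (0:ℝ) < ‖x‖ ^ 2 := pow_pos (norm_pos_iff.mpr hxne) 2
    have h1 : (a + ε) * ‖x‖ ^ 2 ≤ re ⟪A' x, x⟫ :=
      re_inner_ge_of_mem A' hA' hxV' (by linarith)
    have h2 : re ⟪A x, x⟫ ≤ a * ‖x‖ ^ 2 :=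
      re_inner_le_of_orthogonal A hA hAc ha hxV
    have h3 : re ⟪B x, x⟫ < ε * ‖x‖ ^ 2 := by
      calc re ⟪B x, x⟫ ≤ ‖B x‖ * ‖x‖ := re_inner_le_norm _ _
        _ ≤ (‖B‖ * ‖x‖) * ‖x‖ := by gcongr; exact B.le_opNorm x
        _ = ‖B‖ * ‖x‖ ^ 2 := by ring
        _ < ε * ‖x‖ ^ 2 := by
            apply mul_lt_mul_of_pos_right hB hxpos
    have h4 : re ⟪P x, x⟫ = 0 := by
      have hPx : P x ∈ R := ⟨x, rfl⟩
      have := (Submodule.mem_orthogonal R x).mp hxR (P x) hPx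
      rw [this]; simp
    have h5 : re ⟪A' x, x⟫ = re ⟪A x, x⟫ + re ⟪B x, x⟫ + re ⟪P x, x⟫ := by
      rw [hdecomp]
      simp [inner_add_left]
    linarith
  calc nEig A' (a + ε) = Module.finrank ℂ ↥V' := rfl
    _ ≤ Module.finrank ℂ ↥F := hmain
    _ ≤ Module.finrank ℂ ↥V + Module.finrank ℂ ↥R := hrank
    _ = nEig A a + Module.finrank ℂ ↥R := rfl

end AuxWeyl

open RCLike Metric Topology in
/-- If `K(z)` differs from `T(z)` by a small-norm self-adjoint part plus a uniformly
finite-rank self-adjoint part (for each `ε > 0`), `ξ(z) → ∞` as `z → 0⁺`, and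
`ξ(z)⁻¹ n(T(z), a) → 1/(πa)` for every `a > 0`, then also
`ξ(z)⁻¹ n(K(z), a) → 1/(πa)` for every `a > 0`. -/
theorem stmt17 {H : Type*} [NormedAddCommGroup H] [InnerProductSpace ℂ H]
    [CompleteSpace H] [SeparableSpace H]
    (z₀ : ℝ) (hz₀ : 0 < z₀) (K T : ℝ → (H →L[ℂ] H))
    (hKc : ∀ z ∈ Ioo 0 z₀, IsCompactOperator (K z))
    (hKs : ∀ z ∈ Ioo 0 z₀, IsSelfAdjoint (K z))
    (hTc : ∀ z ∈ Ioo 0 z₀, IsCompactOperator (T z))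
    (hTs : ∀ z ∈ Ioo 0 z₀, IsSelfAdjoint (T z))
    (hdec : ∀ ε : ℝ, 0 < ε → ∃ z₁ : ℝ, 0 < z₁ ∧ ∃ k : ℕ,
      ∃ B P : ℝ → (H →L[ℂ] H), ∀ z ∈ Ioo 0 (min z₁ z₀),
        K z - T z = B z + P z ∧ IsSelfAdjoint (B z) ∧ IsSelfAdjoint (P z) ∧
        ‖B z‖ < ε ∧
        Module.Finite ℂ (LinearMap.range ((P z) : H →ₗ[ℂ] H)) ∧
        Module.finrank ℂ (LinearMap.range ((P z) : H →ₗ[ℂ] H)) ≤ k)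
    (ξ : ℝ → ℝ) (hξ : Tendsto ξ (nhdsWithin 0 (Ioi 0)) atTop)
    (hT : ∀ a : ℝ, 0 < a →
      Tendsto (fun z => (nEig (T z) a : ℝ) / ξ z) (nhdsWithin 0 (Ioi 0))
        (nhds (1 / (π * a)))) :
    ∀ a : ℝ, 0 < a →
      Tendsto (fun z => (nEig (K z) a : ℝ) / ξ z) (nhdsWithin 0 (Ioi 0))
        (nhds (1 / (π * a))) := by
  intro a ha
  rw [Metric.tendsto_nhds]
  intro δ hδ
  -- continuity of t ↦ 1/(π t) at a
  have hπa : π * a ≠ 0 := (mul_pos Real.pi_pos ha).ne'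
  have hcont : Tendsto (fun t : ℝ => 1 / (π * t)) (𝓝 a) (𝓝 (1 / (π * a))) :=
    tendsto_const_nhds.div ((continuous_mul_left π).tendsto a) hπa
  obtain ⟨ε', hε'pos, hε'⟩ := Metric.tendsto_nhds_nhds.mp hcont (δ/4) (by linarith)
  set ε := min (ε'/2) (a/2) with hεdef
  have hεpos : 0 < ε := lt_min (by linarith) (by linarith)
  have hεa : ε < a := lt_of_le_of_lt (min_le_right _ _) (by linarith)
  have hεε' : ε < ε' := lt_of_le_of_lt (min_le_left _ _) (by linarith)
  have hbound1 : |1 / (π * (a - ε)) - 1 / (π * a)| < δ/4 := by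
    have h1 : dist (a - ε) a < ε' := by
      rw [Real.dist_eq]
      rw [abs_of_nonpos (by linarith)]
      linarith
    have := hε' h1
    rwa [Real.dist_eq] at this
  have hbound2 : |1 / (π * (a + ε)) - 1 / (π * a)| < δ/4 := by
    have h1 : dist (a + ε) a < ε' := by
      rw [Real.dist_eq, abs_of_nonneg (by linarith)]
      linarith
    have := hε' h1
    rwa [Real.dist_eq] at this
  obtain ⟨z₁, hz₁, k, B, P, hzdec⟩ := hdec ε hεpos
  have hTa1 := Metric.tendsto_nhds.mp (hT (a - ε) (by linarith)) (δ/4) (by linarith)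
  have hTa2 := Metric.tendsto_nhds.mp (hT (a + ε) (by linarith)) (δ/4) (by linarith)
  have E1 : Ioo (0:ℝ) (min z₁ z₀) ∈ 𝓝[>] (0:ℝ) :=
    Ioo_mem_nhdsGT_of_mem ⟨le_refl 0, lt_min hz₁ hz₀⟩
  have E4 : ∀ᶠ z in 𝓝[>] (0:ℝ), 0 < ξ z := hξ.eventually_gt_atTop 0
  have E5 : ∀ᶠ z in 𝓝[>] (0:ℝ), (k:ℝ) / ξ z < δ/4 := by
    have h := Tendsto.div_atTop (tendsto_const_nhds (x := (k:ℝ))) hξ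
    have h2 := Metric.tendsto_nhds.mp h (δ/4) (by linarith)
    filter_upwards [h2] with z hz
    rw [Real.dist_eq, sub_zero] at hz
    exact lt_of_le_of_lt (le_abs_self _) hz
  filter_upwards [E1, hTa1, hTa2, E4, E5] with z hz1 ht1 ht2 hξz hkz
  have hz0 : z ∈ Ioo 0 z₀ := ⟨hz1.1, lt_of_lt_of_le hz1.2 (min_le_right _ _)⟩
  obtain ⟨hKT, hBs, hPs, hBn, hPf, hPk⟩ := hzdec z hz1
  have hKsym : ((K z : H →ₗ[ℂ] H)).IsSymmetric :=
    ContinuousLinearMap.isSelfAdjoint_iff_isSymmetric.mp (hKs z hz0)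
  have hTsym : ((T z : H →ₗ[ℂ] H)).IsSymmetric :=
    ContinuousLinearMap.isSelfAdjoint_iff_isSymmetric.mp (hTs z hz0)
  have hdec1 : K z = T z + B z + P z := by
    have h := sub_eq_iff_eq_add.mp hKT
    rw [h]; abel
  have hdec2 : T z = K z + (-(B z)) + (-(P z)) := by
    rw [hdec1]; abel
  -- apply Weyl bound in both directions
  have n1 : nEig (K z) a ≤ nEig (T z) (a - ε) + k := by
    have h := weyl_bound (T z) (K z) (B z) (P z) hTsym (hTc z hz0) hKsym (hKc z hz0)
      (by linarith : (0:ℝ) < a - ε) hεpos hdec1 hBn hPf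
    rw [sub_add_cancel] at h
    omega
  have n2 : nEig (T z) (a + ε) ≤ nEig (K z) a + k := by
    have hrange : LinearMap.range (((-(P z)) : H →L[ℂ] H) : H →ₗ[ℂ] H)
        = LinearMap.range ((P z : H →ₗ[ℂ] H)) := by
      rw [ContinuousLinearMap.coe_neg, LinearMap.range_neg]
    have hPf' : Module.Finite ℂ ↥(LinearMap.range (((-(P z)) : H →L[ℂ] H) : H →ₗ[ℂ] H)) := by
      rw [hrange]; exact hPf
    have h := weyl_bound (K z) (T z) (-(B z)) (-(P z)) hKsym (hKc z hz0) hTsym (hTc z hz0)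
      ha hεpos hdec2 (by rwa [norm_neg]) hPf'
    have hk' : Module.finrank ℂ ↥(LinearMap.range (((-(P z)) : H →L[ℂ] H) : H →ₗ[ℂ] H)) ≤ k := by
      rw [hrange]; exact hPk
    omega
  -- numerical conclusion
  rw [Real.dist_eq] at ht1 ht2 ⊢
  have hc1 : ((nEig (K z) a : ℝ)) / ξ z ≤ (nEig (T z) (a - ε) : ℝ) / ξ z + (k:ℝ) / ξ z := by
    rw [← add_div]
    apply div_le_div_of_nonneg_right ?_ hξz.le
    push_cast
    exact_mod_cast n1
  have hc2 : (nEig (T z) (a + ε) : ℝ) / ξ z ≤ ((nEig (K z) a : ℝ)) / ξ z + (k:ℝ) / ξ z := by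
    rw [← add_div]
    apply div_le_div_of_nonneg_right ?_ hξz.le
    push_cast
    exact_mod_cast n2
  have hk0 : (0:ℝ) ≤ (k:ℝ) / ξ z := by positivity
  rw [abs_lt] at ht1 ht2 hbound1 hbound2 ⊢
  constructor <;> [linarith [ht2.1, hbound2.1, hc2]; linarith [ht1.2, hbound1.2, hc1]]
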